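/- Let f : Y → X be a surjective map of sets. Then the induced diagram βX → βY ⇉ β(Y ×_X Y) of Stone–Čech compactifications of discrete spaces satisfies the split-(co)equalizer conditions: there exist continuous maps g : βX → βY with βf ∘ g = id and k : βY → β(Y ×_X Y) with βp₁ ∘ k = id and βp₂ ∘ k = g ∘ βf. Consequently, for any presheaf F of sets on the category of Stone–Čech compactifications of discrete spaces, F(βX) → F(βY) ⇉ F(β(Y ×_X Y)) is an equalizer. -/

import Mathlib

open CategoryTheory Limits Opposite

universe u

attribute [local instance] ConcreteCategory.instFunLike

/-- The category of β-sets: the full subcategory of compact Hausdorff spaces consisting of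
Stone–Čech compactifications of discrete spaces (spaces of ultrafilters). -/
abbrev BSetProp : CompHaus.{u} → Prop := fun X => ∃ S : Type u, Nonempty (X ≃ₜ Ultrafilter S)

abbrev BSet := ObjectProperty.FullSubcategory BSetProp.{u}

/-- The β-set `βS` of a set `S`. -/
def bset (S : Type u) : BSet.{u} := ⟨CompHaus.of (Ultrafilter S), S, ⟨Homeomorph.refl _⟩⟩

/-- The continuous extension `βh : βS → βT` of a function `h : S → T`. -/
noncomputable def bsetHom {S T : Type u} (f : S → T) : bset S ⟶ bset T :=
  ObjectProperty.homMk (ConcreteCategory.ofHom ⟨Ultrafilter.extend (pure ∘ f), continuous_ultrafilter_extend _⟩)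

/-- The set-theoretic fiber product `Y ×_X Y`. -/
abbrev FibProd {X Y : Type u} (f : Y → X) : Type u := { p : Y × Y // f p.1 = f p.2 }

noncomputable section

lemma bsetHom_comp {S T U : Type u} (f : S → T) (g : T → U) :
    bsetHom (g ∘ f) = bsetHom f ≫ bsetHom g := by
  have h : (Ultrafilter.extend (pure ∘ (g ∘ f)) : Ultrafilter S → Ultrafilter U)
      = Ultrafilter.extend (pure ∘ g) ∘ Ultrafilter.extend (pure ∘ f) := by
    apply denseRange_pure.equalizer (continuous_ultrafilter_extend _)
      ((continuous_ultrafilter_extend _).comp (continuous_ultrafilter_extend _))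
    funext s
    have e1 := congrFun (ultrafilter_extend_extends (pure ∘ (g ∘ f) : S → Ultrafilter U)) s
    have e2 := congrFun (ultrafilter_extend_extends (pure ∘ f : S → Ultrafilter T)) s
    have e3 := congrFun (ultrafilter_extend_extends (pure ∘ g : T → Ultrafilter U)) (f s)
    simp only [Function.comp_apply] at e1 e2 e3 ⊢
    rw [e1, e2, e3]
  apply ObjectProperty.hom_ext
  apply ConcreteCategory.hom_ext
  intro u
  exact congrFun h u

lemma bsetHom_id {S : Type u} : bsetHom (id : S → S) = 𝟙 (bset S) := by
  have h : (Ultrafilter.extend (pure ∘ (id : S → S)) : Ultrafilter S → Ultrafilter S) = id := by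
    apply denseRange_pure.equalizer (continuous_ultrafilter_extend _) continuous_id
    funext s
    have e := congrFun (ultrafilter_extend_extends (pure ∘ (id : S → S) : S → Ultrafilter S)) s
    simpa using e
  apply ObjectProperty.hom_ext
  apply ConcreteCategory.hom_ext
  intro u
  exact congrFun h u

end
theorem stmt12 {X Y : Type u} (f : Y → X) (hf : Function.Surjective f) :
    (∃ (g : bset X ⟶ bset Y) (k : bset Y ⟶ bset (FibProd f)),
        g ≫ bsetHom f = 𝟙 (bset X) ∧
        k ≫ bsetHom (fun p : FibProd f => p.1.1) = 𝟙 (bset Y) ∧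
        k ≫ bsetHom (fun p : FibProd f => p.1.2) = bsetHom f ≫ g) ∧
    ∀ F : BSet.{u}ᵒᵖ ⥤ Type u,
      Function.Injective (F.map (bsetHom f).op) ∧
      ∀ y : F.obj (op (bset Y)),
        (F.map (bsetHom (fun p : FibProd f => p.1.1)).op y
            = F.map (bsetHom (fun p : FibProd f => p.1.2)).op y
          ↔ ∃ x, F.map (bsetHom f).op x = y) := by
  classical
  obtain ⟨s, hs⟩ := hf.hasRightInverse
  set p₁ : FibProd f → Y := fun p => p.1.1 with hp₁
  set p₂ : FibProd f → Y := fun p => p.1.2 with hp₂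
  set t : Y → FibProd f := fun y => ⟨(y, s (f y)), (hs (f y)).symm⟩ with ht
  set g : bset X ⟶ bset Y := bsetHom s with hg
  set k : bset Y ⟶ bset (FibProd f) := bsetHom t with hk
  have h1 : g ≫ bsetHom f = 𝟙 (bset X) := by
    rw [hg, ← bsetHom_comp]
    have : f ∘ s = id := funext hs
    rw [this, bsetHom_id]
  have h2 : k ≫ bsetHom p₁ = 𝟙 (bset Y) := by
    rw [hk, ← bsetHom_comp]
    have : p₁ ∘ t = id := rfl
    rw [this, bsetHom_id]
  have h3 : k ≫ bsetHom p₂ = bsetHom f ≫ g := by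
    rw [hk, hg, ← bsetHom_comp, ← bsetHom_comp]
    rfl
  refine ⟨⟨g, k, h1, h2, h3⟩, fun F => ?_⟩
  have key : ∀ (A B : BSet) (a : A ⟶ B) (b : B ⟶ A), a ≫ b = 𝟙 A →
      ∀ x : F.obj (op A), F.map a.op (F.map b.op x) = x := by
    intro A B a b hab x
    have := congrArg (fun m => F.map m.op x) hab
    simpa [F.map_comp] using this
  constructor
  · intro x₁ x₂ hx
    have e1 := key _ _ g (bsetHom f) h1 x₁
    have e2 := key _ _ g (bsetHom f) h1 x₂
    rw [← e1, ← e2, hx]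
  · intro y
    constructor
    · intro hy
      refine ⟨F.map g.op y, ?_⟩
      have e3 : F.map (bsetHom f).op (F.map g.op y)
          = F.map k.op (F.map (bsetHom p₂).op y) := by
        have := congrArg (fun m => F.map m.op y) h3
        simpa [F.map_comp] using this.symm
      rw [e3, ← hy]
      exact key _ _ k (bsetHom p₁) h2 y
    · rintro ⟨x, rfl⟩
      have e4 : ∀ q : FibProd f → Y, F.map (bsetHom q).op (F.map (bsetHom f).op x)
          = F.map (bsetHom (f ∘ q)).op x := by
        intro q
        rw [bsetHom_comp]
        simp [F.map_comp]
      rw [e4 p₁, e4 p₂]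
      have : (f ∘ p₁) = (f ∘ p₂) := funext fun p => p.2
      rw [this]
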